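/- Hölder's inequality in Lorentz spaces: if $1 \le p, p_1, p_2 \le \infty$ and $0 < q, q_1, q_2 \le \infty$ satisfy $1/p = 1/p_1 + 1/p_2$ and $1/q = 1/q_1 + 1/q_2$, then $\|fg\|_{L^{p,q}} \lesssim \|f\|_{L^{p_1,q_1}} \|g\|_{L^{p_2,q_2}}$ for all measurable functions $f, g$, with implicit constant depending only on the exponents. -/

import Mathlib

open MeasureTheory ENNReal

/-- The decreasing rearrangement `f^*` of a function, evaluated at `t ∈ ℝ`. -/
noncomputable def rearrangement {α : Type*} [MeasurableSpace α] (μ : Measure α)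
    (f : α → ℂ) (t : ℝ) : ℝ≥0∞ :=
  sInf {l : ℝ≥0∞ | μ {x | l < (‖f x‖₊ : ℝ≥0∞)} ≤ ENNReal.ofReal t}

/-- The Lorentz `L^{p,q}` quasinorm, defined via the decreasing rearrangement. -/
noncomputable def lorentzNorm {α : Type*} [MeasurableSpace α] (μ : Measure α)
    (f : α → ℂ) (p q : ℝ≥0∞) : ℝ≥0∞ :=
  if q = ⊤ then
    ⨆ t : {t : ℝ // 0 < t}, ENNReal.ofReal ((t : ℝ) ^ (1 / p).toReal) * rearrangement μ f t
  else
    (∫⁻ t in Set.Ioi (0 : ℝ),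
        (ENNReal.ofReal (t ^ (1 / p).toReal) * rearrangement μ f t) ^ q.toReal /
          ENNReal.ofReal t) ^ (1 / q.toReal)

section Aux

variable {α : Type*} [MeasurableSpace α] {μ : Measure α} {f g : α → ℂ}

lemma rearrangement_antitone : Antitone (rearrangement μ f) := by
  intro s t hst
  exact sInf_le_sInf (fun l hl => hl.trans (ENNReal.ofReal_le_ofReal hst))

lemma rearrangement_measurable : Measurable (rearrangement μ f) :=
  rearrangement_antitone.measurable

lemma distribution_rearrangement_le (t : ℝ) :
    μ {x | rearrangement μ f t < (‖f x‖₊ : ℝ≥0∞)} ≤ ENNReal.ofReal t := by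
  set S : Set ℝ≥0∞ := {l : ℝ≥0∞ | μ {x | l < (‖f x‖₊ : ℝ≥0∞)} ≤ ENNReal.ofReal t} with hS
  rcases eq_or_ne (sInf S) ⊤ with h | h
  · have : {x | rearrangement μ f t < (‖f x‖₊ : ℝ≥0∞)} = ∅ := by
      ext x
      simp [rearrangement, ← hS, h]
    rw [this]
    simp
  · have hset : {x | sInf S < (‖f x‖₊ : ℝ≥0∞)} =
        ⋃ n : ℕ, {x | sInf S + 1/(n+1) < (‖f x‖₊ : ℝ≥0∞)} := by
      ext x
      simp only [Set.mem_setOf_eq, Set.mem_iUnion]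
      constructor
      · intro hx
        obtain ⟨r, hr, hlt⟩ := ENNReal.lt_iff_exists_add_pos_lt.1 hx
        obtain ⟨n, hn⟩ := exists_nat_one_div_lt hr
        refine ⟨n, lt_of_le_of_lt (add_le_add le_rfl ?_) hlt⟩
        have h1 : ((1:ℝ≥0∞)/(n+1)) = ENNReal.ofReal (1/(n+1)) := by
          rw [ENNReal.ofReal_div_of_pos (by positivity), ENNReal.ofReal_one]
          norm_num [ENNReal.ofReal_add, ENNReal.ofReal_natCast]
        rw [h1, ← ENNReal.ofReal_coe_nnreal]
        exact ENNReal.ofReal_le_ofReal hn.le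
      · rintro ⟨n, hn⟩
        exact lt_of_le_of_lt le_self_add hn
    have hmono : Monotone (fun n : ℕ => {x | sInf S + 1/(n+1) < (‖f x‖₊ : ℝ≥0∞)}) := by
      intro n m hnm x hx
      simp only [Set.mem_setOf_eq] at hx ⊢
      refine lt_of_le_of_lt (add_le_add le_rfl ?_) hx
      exact ENNReal.div_le_div le_rfl (by exact_mod_cast add_le_add_left (Nat.cast_le.2 hnm) 1)
    have hmemS : ∀ n : ℕ, (sInf S + 1/(n+1)) ∈ S := by
      intro n
      have hlt : sInf S < sInf S + 1/(n+1) :=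
        ENNReal.lt_add_right h (by simp [ENNReal.div_eq_top])
      obtain ⟨l, hlS, hl⟩ := sInf_lt_iff.1 hlt
      exact le_trans (measure_mono (fun x hx => lt_of_le_of_lt hl.le hx)) hlS
    have : rearrangement μ f t = sInf S := rfl
    rw [this, hset, hmono.measure_iUnion]
    exact iSup_le fun n => hmemS n

lemma rearrangement_le_of_mem {l : ℝ≥0∞} {t : ℝ}
    (h : μ {x | l < (‖f x‖₊ : ℝ≥0∞)} ≤ ENNReal.ofReal t) :
    rearrangement μ f t ≤ l := sInf_le h

lemma rearrangement_mul_le {s t : ℝ} (hs : 0 ≤ s) (ht : 0 ≤ t) :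
    rearrangement μ (fun x => f x * g x) (s + t) ≤
      rearrangement μ f s * rearrangement μ g t := by
  apply rearrangement_le_of_mem
  have hsub : {x | rearrangement μ f s * rearrangement μ g t < (‖f x * g x‖₊ : ℝ≥0∞)} ⊆
      {x | rearrangement μ f s < (‖f x‖₊ : ℝ≥0∞)} ∪ {x | rearrangement μ g t < (‖g x‖₊ : ℝ≥0∞)} := by
    intro x hx
    by_contra hc
    simp only [Set.mem_union, Set.mem_setOf_eq, not_or, not_lt] at hc
    have : (‖f x * g x‖₊ : ℝ≥0∞) ≤ rearrangement μ f s * rearrangement μ g t := by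
      rw [nnnorm_mul, ENNReal.coe_mul]
      exact mul_le_mul' hc.1 hc.2
    exact absurd hx (not_lt.2 this)
  calc μ {x | rearrangement μ f s * rearrangement μ g t < (‖f x * g x‖₊ : ℝ≥0∞)}
      ≤ μ {x | rearrangement μ f s < (‖f x‖₊ : ℝ≥0∞)} +
        μ {x | rearrangement μ g t < (‖g x‖₊ : ℝ≥0∞)} :=
        le_trans (measure_mono hsub) (measure_union_le _ _)
    _ ≤ ENNReal.ofReal s + ENNReal.ofReal t :=
        add_le_add (distribution_rearrangement_le s) (distribution_rearrangement_le t)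
    _ = ENNReal.ofReal (s + t) := (ENNReal.ofReal_add hs ht).symm

lemma rearrangement_mul_le' {t : ℝ} (ht : 0 ≤ t) :
    rearrangement μ (fun x => f x * g x) t ≤
      rearrangement μ f (t/2) * rearrangement μ g (t/2) := by
  have := rearrangement_mul_le (μ := μ) (f := f) (g := g) (s := t/2) (t := t/2) (by linarith) (by linarith)
  rwa [add_halves] at this

lemma lintegral_comp_div_two (G : ℝ → ℝ≥0∞) (hG : Measurable G) :
    ∫⁻ t in Set.Ioi (0:ℝ), G (t/2) = 2 * ∫⁻ s in Set.Ioi (0:ℝ), G s := by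
  set H : ℝ → ℝ≥0∞ := (Set.Ioi (0:ℝ)).indicator (fun t => G (t/2)) with hHdef
  have hH : Measurable H := (hG.comp (measurable_id.div_const 2)).indicator measurableSet_Ioi
  have hmap : Measure.map (fun x : ℝ => 2 * x) volume = ENNReal.ofReal |2⁻¹| • volume :=
    Real.map_volume_mul_left two_ne_zero
  have h1 : ∫⁻ y, H y ∂(Measure.map (fun x : ℝ => 2 * x) volume) = ∫⁻ s, H (2 * s) :=
    lintegral_map hH (measurable_const_mul 2)
  have h2 : ∀ s : ℝ, H (2 * s) = (Set.Ioi (0:ℝ)).indicator G s := by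
    intro s
    by_cases hs : 0 < s
    · rw [hHdef, Set.indicator_of_mem (by simpa [Set.mem_Ioi] using by linarith : (2*s) ∈ Set.Ioi (0:ℝ)),
        Set.indicator_of_mem (Set.mem_Ioi.2 hs)]
      norm_num
    · rw [hHdef, Set.indicator_of_notMem (by simp [Set.mem_Ioi]; linarith),
        Set.indicator_of_notMem (by simpa [Set.mem_Ioi] using hs)]
  have h3 : ∫⁻ s, H (2 * s) = ∫⁻ s in Set.Ioi (0:ℝ), G s := by
    simp_rw [h2]
    exact lintegral_indicator measurableSet_Ioi G
  have h4 : ∫⁻ y, H y ∂(Measure.map (fun x : ℝ => 2 * x) volume) = 2⁻¹ * ∫⁻ y, H y := by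
    rw [hmap, lintegral_smul_measure]
    congr 1
    rw [show |(2:ℝ)⁻¹| = (2:ℝ)⁻¹ by norm_num, ENNReal.ofReal_inv_of_pos two_pos,
      ENNReal.ofReal_ofNat]
  have h5 : ∫⁻ y, H y = ∫⁻ t in Set.Ioi (0:ℝ), G (t/2) :=
    lintegral_indicator measurableSet_Ioi _
  have h6 : (2:ℝ≥0∞)⁻¹ * ∫⁻ t in Set.Ioi (0:ℝ), G (t/2) = ∫⁻ s in Set.Ioi (0:ℝ), G s := by
    rw [← h5, ← h4, h1, h3]
  calc ∫⁻ t in Set.Ioi (0:ℝ), G (t/2)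
      = 2 * (2⁻¹ * ∫⁻ t in Set.Ioi (0:ℝ), G (t/2)) := by
        rw [← mul_assoc, ENNReal.mul_inv_cancel (by norm_num) (by norm_num), one_mul]
    _ = 2 * ∫⁻ s in Set.Ioi (0:ℝ), G s := by rw [h6]

end Aux

/-- Hölder's inequality in Lorentz spaces: if `1/p = 1/p₁ + 1/p₂` and
`1/q = 1/q₁ + 1/q₂`, then `‖fg‖_{L^{p,q}} ≲ ‖f‖_{L^{p₁,q₁}} ‖g‖_{L^{p₂,q₂}}`,
with constant depending only on the exponents. -/
theorem lorentz_holder (p p₁ p₂ q q₁ q₂ : ℝ≥0∞)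
    (hp : 1 ≤ p) (hp₁ : 1 ≤ p₁) (hp₂ : 1 ≤ p₂)
    (hq : 0 < q) (hq₁ : 0 < q₁) (hq₂ : 0 < q₂)
    (hpe : 1 / p = 1 / p₁ + 1 / p₂) (hqe : 1 / q = 1 / q₁ + 1 / q₂) :
    ∃ C : ℝ≥0∞, 0 < C ∧ C ≠ ⊤ ∧
      ∀ (α : Type) [MeasurableSpace α] (μ : Measure α), SigmaFinite μ →
        ∀ f g : α → ℂ, Measurable f → Measurable g →
          lorentzNorm μ (fun x => f x * g x) p q ≤
            C * lorentzNorm μ f p₁ q₁ * lorentzNorm μ g p₂ q₂ := by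
  refine ⟨2, by norm_num, by norm_num, ?_⟩
  intro α _ μ _ f g hf hg
  have hp1top : 1/p₁ ≠ ⊤ := by
    have : 1/p₁ ≤ 1 := by rw [one_div]; exact ENNReal.inv_le_one.2 hp₁
    exact (this.trans_lt (by norm_num)).ne
  have hp2top : 1/p₂ ≠ ⊤ := by
    have : 1/p₂ ≤ 1 := by rw [one_div]; exact ENNReal.inv_le_one.2 hp₂
    exact (this.trans_lt (by norm_num)).ne
  set a := (1/p).toReal with ha
  set a₁ := (1/p₁).toReal with ha1
  set a₂ := (1/p₂).toReal with ha2
  have haa : a = a₁ + a₂ := by rw [ha, ha1, ha2, hpe, ENNReal.toReal_add hp1top hp2top]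
  have ha_le_one : a ≤ 1 := by
    have h1 : (1:ℝ≥0∞)/p ≤ 1 := by rw [one_div]; exact ENNReal.inv_le_one.2 hp
    have h2 := ENNReal.toReal_mono (by norm_num : (1:ℝ≥0∞) ≠ ⊤) h1
    rwa [ENNReal.toReal_one] at h2
  set F := rearrangement μ f with hF
  set G := rearrangement μ g with hG
  set R := rearrangement μ (fun x => f x * g x) with hR
  set Φ₁ : ℝ → ℝ≥0∞ := fun s => ENNReal.ofReal (s ^ a₁) * F s with hPhi1
  set Φ₂ : ℝ → ℝ≥0∞ := fun s => ENNReal.ofReal (s ^ a₂) * G s with hPhi2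
  have hΦ₁m : Measurable Φ₁ :=
    (ENNReal.measurable_ofReal.comp (measurable_id.pow measurable_const)).mul
      rearrangement_measurable
  have hΦ₂m : Measurable Φ₂ :=
    (ENNReal.measurable_ofReal.comp (measurable_id.pow measurable_const)).mul
      rearrangement_measurable
  have hkey : ∀ t : ℝ, 0 < t →
      ENNReal.ofReal (t ^ a) * R t ≤ ENNReal.ofReal (2 ^ a) * (Φ₁ (t/2) * Φ₂ (t/2)) := by
    intro t ht
    have ht2 : (0:ℝ) < t/2 := by linarith
    have h2a : ENNReal.ofReal (t^a) =
        ENNReal.ofReal (2^a) * (ENNReal.ofReal ((t/2)^a₁) * ENNReal.ofReal ((t/2)^a₂)) := by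
      rw [← ENNReal.ofReal_mul (by positivity), ← ENNReal.ofReal_mul (by positivity)]
      congr 1
      rw [← Real.rpow_add ht2, ← haa, ← Real.mul_rpow (by norm_num) ht2.le,
        show (2:ℝ)*(t/2) = t by ring]
    have hRle : R t ≤ F (t/2) * G (t/2) := rearrangement_mul_le' ht.le
    calc ENNReal.ofReal (t^a) * R t
        ≤ (ENNReal.ofReal (2^a) * (ENNReal.ofReal ((t/2)^a₁) * ENNReal.ofReal ((t/2)^a₂))) *
            (F (t/2) * G (t/2)) := by rw [← h2a]; exact mul_le_mul' le_rfl hRle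
      _ = ENNReal.ofReal (2^a) * (Φ₁ (t/2) * Φ₂ (t/2)) := by rw [hPhi1, hPhi2]; ring
  have h2le : ENNReal.ofReal (2^a) ≤ 2 := by
    calc ENNReal.ofReal (2^a) ≤ ENNReal.ofReal 2 := by
          apply ENNReal.ofReal_le_ofReal
          calc (2:ℝ)^a ≤ 2^(1:ℝ) := Real.rpow_le_rpow_of_exponent_le one_le_two ha_le_one
            _ = 2 := Real.rpow_one 2
      _ = 2 := ENNReal.ofReal_ofNat 2
  have hkey2 : ∀ t : ℝ, 0 < t →
      ENNReal.ofReal (t ^ a) * R t ≤ 2 * (Φ₁ (t/2) * Φ₂ (t/2)) :=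
    fun t ht => (hkey t ht).trans (mul_le_mul' h2le le_rfl)
  rcases eq_or_ne q ⊤ with hqt | hqt
  · -- q = ⊤, hence q₁ = q₂ = ⊤
    have hq0 : (1:ℝ≥0∞)/q₁ = 0 ∧ (1:ℝ≥0∞)/q₂ = 0 := by
      rw [hqt] at hqe
      simp only [ENNReal.div_top] at hqe
      exact ⟨(add_eq_zero.1 hqe.symm).1, (add_eq_zero.1 hqe.symm).2⟩
    have hq1t : q₁ = ⊤ := by
      rcases (ENNReal.div_eq_zero_iff.1 hq0.1) with h | h
      · exact absurd h one_ne_zero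
      · exact h
    have hq2t : q₂ = ⊤ := by
      rcases (ENNReal.div_eq_zero_iff.1 hq0.2) with h | h
      · exact absurd h one_ne_zero
      · exact h
    rw [lorentzNorm, lorentzNorm, lorentzNorm, if_pos hqt, if_pos hq1t, if_pos hq2t]
    rw [← hF, ← hG, ← hR, ← ha, ← ha1, ← ha2]
    refine iSup_le ?_
    rintro ⟨t, ht⟩
    have hb1 : Φ₁ (t/2) ≤ ⨆ s : {s : ℝ // 0 < s}, ENNReal.ofReal ((s:ℝ)^a₁) * F s :=
      le_iSup_of_le ⟨t/2, by linarith⟩ le_rfl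
    have hb2 : Φ₂ (t/2) ≤ ⨆ s : {s : ℝ // 0 < s}, ENNReal.ofReal ((s:ℝ)^a₂) * G s :=
      le_iSup_of_le ⟨t/2, by linarith⟩ le_rfl
    calc ENNReal.ofReal ((t:ℝ)^a) * R t ≤ 2 * (Φ₁ (t/2) * Φ₂ (t/2)) := hkey2 t ht
      _ ≤ 2 * ((⨆ s : {s : ℝ // 0 < s}, ENNReal.ofReal ((s:ℝ)^a₁) * F s) *
            (⨆ s : {s : ℝ // 0 < s}, ENNReal.ofReal ((s:ℝ)^a₂) * G s)) :=
          mul_le_mul' le_rfl (mul_le_mul' hb1 hb2)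
      _ = _ := by ring
  · -- q ≠ ⊤
    have hqr : 0 < q.toReal := ENNReal.toReal_pos hq.ne' hqt
    set qr := q.toReal with hqrdef
    set J : ℝ → ℝ≥0∞ := fun s => (Φ₁ s * Φ₂ s) ^ qr / ENNReal.ofReal s with hJ
    have hJm : Measurable J :=
      ((hΦ₁m.mul hΦ₂m).pow measurable_const).div ENNReal.measurable_ofReal
    have step1 : (∫⁻ t in Set.Ioi (0:ℝ),
        (ENNReal.ofReal (t ^ a) * R t) ^ qr / ENNReal.ofReal t) ≤
        (2:ℝ≥0∞) ^ qr * ∫⁻ s in Set.Ioi (0:ℝ), J s := by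
      have hpt : ∀ t ∈ Set.Ioi (0:ℝ),
          (ENNReal.ofReal (t ^ a) * R t) ^ qr / ENNReal.ofReal t ≤
            ((2:ℝ≥0∞) ^ qr * 2⁻¹) * J (t/2) := by
        intro t ht
        rw [Set.mem_Ioi] at ht
        have h3 : ENNReal.ofReal t = 2 * ENNReal.ofReal (t/2) := by
          rw [← ENNReal.ofReal_ofNat, ← ENNReal.ofReal_mul (by norm_num)]
          congr 1
          ring
        have h1 : (ENNReal.ofReal (t ^ a) * R t) ^ qr ≤
            (2:ℝ≥0∞) ^ qr * (Φ₁ (t/2) * Φ₂ (t/2)) ^ qr := by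
          rw [← ENNReal.mul_rpow_of_nonneg _ _ hqr.le]
          exact ENNReal.rpow_le_rpow (hkey2 t ht) hqr.le
        calc (ENNReal.ofReal (t ^ a) * R t) ^ qr / ENNReal.ofReal t
            ≤ ((2:ℝ≥0∞) ^ qr * (Φ₁ (t/2) * Φ₂ (t/2)) ^ qr) / (2 * ENNReal.ofReal (t/2)) := by
              rw [← h3]; exact ENNReal.div_le_div h1 le_rfl
          _ = ((2:ℝ≥0∞) ^ qr * 2⁻¹) * J (t/2) := by
              rw [hJ]
              simp only [div_eq_mul_inv]
              rw [ENNReal.mul_inv (Or.inl (by norm_num)) (Or.inl (by norm_num))]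
              ring
      calc (∫⁻ t in Set.Ioi (0:ℝ), (ENNReal.ofReal (t ^ a) * R t) ^ qr / ENNReal.ofReal t)
          ≤ ∫⁻ t in Set.Ioi (0:ℝ), ((2:ℝ≥0∞) ^ qr * 2⁻¹) * J (t/2) :=
            setLIntegral_mono' measurableSet_Ioi hpt
        _ = ((2:ℝ≥0∞) ^ qr * 2⁻¹) * ∫⁻ t in Set.Ioi (0:ℝ), J (t/2) :=
            lintegral_const_mul' _ _
              (ENNReal.mul_ne_top (ENNReal.rpow_ne_top_of_nonneg hqr.le (by norm_num))
                (by norm_num))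
        _ = ((2:ℝ≥0∞) ^ qr * 2⁻¹) * (2 * ∫⁻ s in Set.Ioi (0:ℝ), J s) := by
            rw [lintegral_comp_div_two J hJm]
        _ = (2:ℝ≥0∞) ^ qr * ∫⁻ s in Set.Ioi (0:ℝ), J s := by
            rw [mul_assoc, ← mul_assoc (2⁻¹ : ℝ≥0∞),
              ENNReal.inv_mul_cancel (by norm_num) (by norm_num), one_mul]
    rw [lorentzNorm, if_neg hqt, ← hR, ← ha, ← hqrdef]
    have step2 : (∫⁻ t in Set.Ioi (0:ℝ),
        (ENNReal.ofReal (t ^ a) * R t) ^ qr / ENNReal.ofReal t) ^ (1/qr) ≤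
        2 * (∫⁻ s in Set.Ioi (0:ℝ), J s) ^ (1/qr) := by
      calc (∫⁻ t in Set.Ioi (0:ℝ),
            (ENNReal.ofReal (t ^ a) * R t) ^ qr / ENNReal.ofReal t) ^ (1/qr)
          ≤ ((2:ℝ≥0∞) ^ qr * ∫⁻ s in Set.Ioi (0:ℝ), J s) ^ (1/qr) :=
            ENNReal.rpow_le_rpow step1 (by positivity)
        _ = 2 * (∫⁻ s in Set.Ioi (0:ℝ), J s) ^ (1/qr) := by
            rw [ENNReal.mul_rpow_of_nonneg _ _ (by positivity), ← ENNReal.rpow_mul,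
              mul_one_div_cancel hqr.ne', ENNReal.rpow_one]
    refine step2.trans ?_
    have main : (∫⁻ s in Set.Ioi (0:ℝ), J s) ^ (1/qr) ≤
        lorentzNorm μ f p₁ q₁ * lorentzNorm μ g p₂ q₂ := by
      rcases eq_or_ne q₁ ⊤ with hq1t | hq1t
      · -- q₁ = ⊤, so q₂ = q
        have hqq2 : q₂ = q := by
          rw [hq1t] at hqe
          simp only [ENNReal.div_top, zero_add, one_div, ENNReal.inv_top] at hqe
          exact (inv_inj.1 hqe).symm
        set N₁ := lorentzNorm μ f p₁ q₁ with hN1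
        have hN1eq : N₁ = ⨆ s : {s : ℝ // 0 < s}, ENNReal.ofReal ((s:ℝ)^a₁) * F s := by
          rw [hN1, lorentzNorm, if_pos hq1t, ← ha1, ← hF]
        have hΦ₁le : ∀ s : ℝ, 0 < s → Φ₁ s ≤ N₁ := by
          intro s hs
          rw [hN1eq]
          exact le_iSup_of_le ⟨s, hs⟩ le_rfl
        have hb : ∀ s ∈ Set.Ioi (0:ℝ), J s ≤ N₁ ^ qr * ((Φ₂ s) ^ qr / ENNReal.ofReal s) := by
          intro s hs
          rw [Set.mem_Ioi] at hs
          rw [hJ]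
          simp only [div_eq_mul_inv]
          calc (Φ₁ s * Φ₂ s) ^ qr * (ENNReal.ofReal s)⁻¹
              ≤ (N₁ * Φ₂ s) ^ qr * (ENNReal.ofReal s)⁻¹ :=
                mul_le_mul' (ENNReal.rpow_le_rpow (mul_le_mul' (hΦ₁le s hs) le_rfl) hqr.le)
                  le_rfl
            _ = N₁ ^ qr * ((Φ₂ s) ^ qr * (ENNReal.ofReal s)⁻¹) := by
                rw [ENNReal.mul_rpow_of_nonneg _ _ hqr.le, mul_assoc]
        have hint : (∫⁻ s in Set.Ioi (0:ℝ), J s) ≤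
            N₁ ^ qr * ∫⁻ s in Set.Ioi (0:ℝ), (Φ₂ s) ^ qr / ENNReal.ofReal s := by
          calc (∫⁻ s in Set.Ioi (0:ℝ), J s)
              ≤ ∫⁻ s in Set.Ioi (0:ℝ), N₁ ^ qr * ((Φ₂ s) ^ qr / ENNReal.ofReal s) :=
                setLIntegral_mono' measurableSet_Ioi hb
            _ = N₁ ^ qr * ∫⁻ s in Set.Ioi (0:ℝ), (Φ₂ s) ^ qr / ENNReal.ofReal s :=
                lintegral_const_mul _
                  ((hΦ₂m.pow measurable_const).div ENNReal.measurable_ofReal)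
        calc (∫⁻ s in Set.Ioi (0:ℝ), J s) ^ (1/qr)
            ≤ (N₁ ^ qr * ∫⁻ s in Set.Ioi (0:ℝ), (Φ₂ s) ^ qr / ENNReal.ofReal s) ^ (1/qr) :=
              ENNReal.rpow_le_rpow hint (by positivity)
          _ = N₁ * (∫⁻ s in Set.Ioi (0:ℝ), (Φ₂ s) ^ qr / ENNReal.ofReal s) ^ (1/qr) := by
              rw [ENNReal.mul_rpow_of_nonneg _ _ (by positivity), ← ENNReal.rpow_mul,
                mul_one_div_cancel hqr.ne', ENNReal.rpow_one]
          _ = N₁ * lorentzNorm μ g p₂ q₂ := by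
              congr 1
              rw [lorentzNorm, if_neg (by rw [hqq2]; exact hqt), ← ha2, ← hG, hqq2,
                ← hqrdef]
      rcases eq_or_ne q₂ ⊤ with hq2t | hq2t
      · -- q₂ = ⊤, so q₁ = q
        have hqq1 : q₁ = q := by
          rw [hq2t] at hqe
          simp only [ENNReal.div_top, add_zero, one_div, ENNReal.inv_top] at hqe
          exact (inv_inj.1 hqe).symm
        set N₂ := lorentzNorm μ g p₂ q₂ with hN2
        have hN2eq : N₂ = ⨆ s : {s : ℝ // 0 < s}, ENNReal.ofReal ((s:ℝ)^a₂) * G s := by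
          rw [hN2, lorentzNorm, if_pos hq2t, ← ha2, ← hG]
        have hΦ₂le : ∀ s : ℝ, 0 < s → Φ₂ s ≤ N₂ := by
          intro s hs
          rw [hN2eq]
          exact le_iSup_of_le ⟨s, hs⟩ le_rfl
        have hb : ∀ s ∈ Set.Ioi (0:ℝ), J s ≤ N₂ ^ qr * ((Φ₁ s) ^ qr / ENNReal.ofReal s) := by
          intro s hs
          rw [Set.mem_Ioi] at hs
          rw [hJ]
          simp only [div_eq_mul_inv]
          calc (Φ₁ s * Φ₂ s) ^ qr * (ENNReal.ofReal s)⁻¹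
              ≤ (Φ₁ s * N₂) ^ qr * (ENNReal.ofReal s)⁻¹ :=
                mul_le_mul' (ENNReal.rpow_le_rpow (mul_le_mul' le_rfl (hΦ₂le s hs)) hqr.le)
                  le_rfl
            _ = N₂ ^ qr * ((Φ₁ s) ^ qr * (ENNReal.ofReal s)⁻¹) := by
                rw [ENNReal.mul_rpow_of_nonneg _ _ hqr.le]
                ring
        have hint : (∫⁻ s in Set.Ioi (0:ℝ), J s) ≤
            N₂ ^ qr * ∫⁻ s in Set.Ioi (0:ℝ), (Φ₁ s) ^ qr / ENNReal.ofReal s := by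
          calc (∫⁻ s in Set.Ioi (0:ℝ), J s)
              ≤ ∫⁻ s in Set.Ioi (0:ℝ), N₂ ^ qr * ((Φ₁ s) ^ qr / ENNReal.ofReal s) :=
                setLIntegral_mono' measurableSet_Ioi hb
            _ = N₂ ^ qr * ∫⁻ s in Set.Ioi (0:ℝ), (Φ₁ s) ^ qr / ENNReal.ofReal s :=
                lintegral_const_mul _
                  ((hΦ₁m.pow measurable_const).div ENNReal.measurable_ofReal)
        calc (∫⁻ s in Set.Ioi (0:ℝ), J s) ^ (1/qr)
            ≤ (N₂ ^ qr * ∫⁻ s in Set.Ioi (0:ℝ), (Φ₁ s) ^ qr / ENNReal.ofReal s) ^ (1/qr) :=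
              ENNReal.rpow_le_rpow hint (by positivity)
          _ = N₂ * (∫⁻ s in Set.Ioi (0:ℝ), (Φ₁ s) ^ qr / ENNReal.ofReal s) ^ (1/qr) := by
              rw [ENNReal.mul_rpow_of_nonneg _ _ (by positivity), ← ENNReal.rpow_mul,
                mul_one_div_cancel hqr.ne', ENNReal.rpow_one]
          _ = lorentzNorm μ f p₁ q₁ * N₂ := by
              rw [mul_comm]
              congr 1
              rw [lorentzNorm, if_neg (by rw [hqq1]; exact hqt), ← ha1, ← hF, hqq1, ← hqrdef]
      · -- both finite : Hölder
        have hq1r : 0 < q₁.toReal := ENNReal.toReal_pos hq₁.ne' hq1t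
        have hq2r : 0 < q₂.toReal := ENNReal.toReal_pos hq₂.ne' hq2t
        have hsum : 1/qr = 1/q₁.toReal + 1/q₂.toReal := by
          have h := congrArg ENNReal.toReal hqe
          rwa [ENNReal.toReal_add (by simp [ENNReal.div_eq_top, hq₁.ne'])
              (by simp [ENNReal.div_eq_top, hq₂.ne']), ENNReal.toReal_div, ENNReal.toReal_div,
            ENNReal.toReal_div, ENNReal.toReal_one] at h
        set r1 := q₁.toReal / qr with hr1
        set r2 := q₂.toReal / qr with hr2
        have hr1pos : 0 < r1 := div_pos hq1r hqr
        have hr2pos : 0 < r2 := div_pos hq2r hqr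
        have hqlt1 : qr < q₁.toReal := by
          have h1 : 1/q₁.toReal < 1/qr := by
            rw [hsum]
            have := one_div_pos.2 hq2r
            linarith
          exact lt_of_one_div_lt_one_div hq1r h1
        have hinvsum : 1/r1 + 1/r2 = 1 := by
          rw [hr1, hr2, one_div_div, one_div_div, div_add_div _ _ hq1r.ne' hq2r.ne',
            div_eq_one_iff_eq (by positivity)]
          field_simp at hsum
          linarith [hsum]
        have hconj : r1.HolderConjugate r2 := by
          refine Real.holderConjugate_iff.mpr ⟨?_, ?_⟩
          · rw [hr1]
            exact (one_lt_div hqr).2 hqlt1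
          · rw [← one_div, ← one_div]
            exact hinvsum
        set u : ℝ → ℝ≥0∞ := fun s => (Φ₁ s) ^ qr * ((ENNReal.ofReal s)⁻¹) ^ (1/r1) with hu
        set v : ℝ → ℝ≥0∞ := fun s => (Φ₂ s) ^ qr * ((ENNReal.ofReal s)⁻¹) ^ (1/r2) with hv
        have hum : Measurable u :=
          (hΦ₁m.pow measurable_const).mul
            ((ENNReal.measurable_ofReal.inv).pow measurable_const)
        have hvm : Measurable v :=
          (hΦ₂m.pow measurable_const).mul
            ((ENNReal.measurable_ofReal.inv).pow measurable_const)
        have hJuv : ∀ s ∈ Set.Ioi (0:ℝ), J s = u s * v s := by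
          intro s hs
          rw [Set.mem_Ioi] at hs
          have hx0 : (ENNReal.ofReal s)⁻¹ ≠ 0 := ENNReal.inv_ne_zero.2 ENNReal.ofReal_ne_top
          have hxt : (ENNReal.ofReal s)⁻¹ ≠ ⊤ :=
            ENNReal.inv_ne_top.2 (ENNReal.ofReal_pos.2 hs).ne'
          have hsplit : ((ENNReal.ofReal s)⁻¹) ^ (1/r1) * ((ENNReal.ofReal s)⁻¹) ^ (1/r2) =
              (ENNReal.ofReal s)⁻¹ := by
            rw [← ENNReal.rpow_add _ _ hx0 hxt, hinvsum, ENNReal.rpow_one]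
          simp only [hJ, hu, hv]
          rw [ENNReal.div_eq_inv_mul, ENNReal.mul_rpow_of_nonneg _ _ hqr.le]
          conv_lhs => rw [← hsplit]
          ring
        have hcong : (∫⁻ s in Set.Ioi (0:ℝ), J s) = ∫⁻ s in Set.Ioi (0:ℝ), u s * v s :=
          setLIntegral_congr_fun measurableSet_Ioi hJuv
        have hholder := ENNReal.lintegral_mul_le_Lp_mul_Lq (volume.restrict (Set.Ioi 0)) hconj
          hum.aemeasurable hvm.aemeasurable
        simp only [Pi.mul_apply] at hholder
        have hqr1 : qr * r1 = q₁.toReal := by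
          rw [hr1, mul_comm]
          exact div_mul_cancel₀ _ hqr.ne'
        have hqr2 : qr * r2 = q₂.toReal := by
          rw [hr2, mul_comm]
          exact div_mul_cancel₀ _ hqr.ne'
        have hone1 : (1/r1) * r1 = 1 := one_div_mul_cancel hr1pos.ne'
        have hone2 : (1/r2) * r2 = 1 := one_div_mul_cancel hr2pos.ne'
        have hur : ∀ s ∈ Set.Ioi (0:ℝ),
            (u s) ^ r1 = (Φ₁ s) ^ q₁.toReal / ENNReal.ofReal s := by
          intro s hs
          simp only [hu]
          rw [ENNReal.mul_rpow_of_nonneg _ _ hr1pos.le, ← ENNReal.rpow_mul, ← ENNReal.rpow_mul,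
            hone1, hqr1, ENNReal.rpow_one, ENNReal.div_eq_inv_mul]
          ring
        have hvr : ∀ s ∈ Set.Ioi (0:ℝ),
            (v s) ^ r2 = (Φ₂ s) ^ q₂.toReal / ENNReal.ofReal s := by
          intro s hs
          simp only [hv]
          rw [ENNReal.mul_rpow_of_nonneg _ _ hr2pos.le, ← ENNReal.rpow_mul, ← ENNReal.rpow_mul,
            hone2, hqr2, ENNReal.rpow_one, ENNReal.div_eq_inv_mul]
          ring
        have huint : ∫⁻ s in Set.Ioi (0:ℝ), (u s) ^ r1 =
            ∫⁻ s in Set.Ioi (0:ℝ), (Φ₁ s) ^ q₁.toReal / ENNReal.ofReal s :=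
          setLIntegral_congr_fun measurableSet_Ioi hur
        have hvint : ∫⁻ s in Set.Ioi (0:ℝ), (v s) ^ r2 =
            ∫⁻ s in Set.Ioi (0:ℝ), (Φ₂ s) ^ q₂.toReal / ENNReal.ofReal s :=
          setLIntegral_congr_fun measurableSet_Ioi hvr
        have hN1 : lorentzNorm μ f p₁ q₁ =
            (∫⁻ s in Set.Ioi (0:ℝ), (Φ₁ s) ^ q₁.toReal / ENNReal.ofReal s) ^ (1/q₁.toReal) := by
          rw [lorentzNorm, if_neg hq1t, ← ha1, ← hF]
        have hN2 : lorentzNorm μ g p₂ q₂ =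
            (∫⁻ s in Set.Ioi (0:ℝ), (Φ₂ s) ^ q₂.toReal / ENNReal.ofReal s) ^ (1/q₂.toReal) := by
          rw [lorentzNorm, if_neg hq2t, ← ha2, ← hG]
        have hexp1 : (1/r1) * (1/qr) = 1/q₁.toReal := by
          rw [div_mul_div_comm, one_mul, mul_comm r1 qr, hqr1]
        have hexp2 : (1/r2) * (1/qr) = 1/q₂.toReal := by
          rw [div_mul_div_comm, one_mul, mul_comm r2 qr, hqr2]
        calc (∫⁻ s in Set.Ioi (0:ℝ), J s) ^ (1/qr)
            = (∫⁻ s in Set.Ioi (0:ℝ), u s * v s) ^ (1/qr) := by rw [hcong]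
          _ ≤ ((∫⁻ s in Set.Ioi (0:ℝ), u s ^ r1) ^ (1/r1) *
                (∫⁻ s in Set.Ioi (0:ℝ), v s ^ r2) ^ (1/r2)) ^ (1/qr) :=
              ENNReal.rpow_le_rpow hholder (by positivity)
          _ = (∫⁻ s in Set.Ioi (0:ℝ), u s ^ r1) ^ ((1/r1) * (1/qr)) *
                (∫⁻ s in Set.Ioi (0:ℝ), v s ^ r2) ^ ((1/r2) * (1/qr)) := by
              rw [ENNReal.mul_rpow_of_nonneg _ _ (by positivity), ← ENNReal.rpow_mul,
                ← ENNReal.rpow_mul]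
          _ = lorentzNorm μ f p₁ q₁ * lorentzNorm μ g p₂ q₂ := by
              rw [huint, hvint, hN1, hN2, hexp1, hexp2]
    calc 2 * (∫⁻ s in Set.Ioi (0:ℝ), J s) ^ (1/qr)
        ≤ 2 * (lorentzNorm μ f p₁ q₁ * lorentzNorm μ g p₂ q₂) := mul_le_mul' le_rfl main
      _ = _ := by rw [mul_assoc]
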